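/- arXiv:2003.12005 — 2 statements merged into one kernel-verified Lean document; each statement's English description precedes it below -/
import Mathlib

section
/- Let W = diag(w) for a strictly positive vector w ∈ ℝ^N, and suppose the linear map 𝒜 : ℝ^N → ℂ^{n×n} satisfies the ℓ^q-robust nullspace property of order s with respect to a norm ‖·‖ with parameters ρ ∈ (0,1) and τ > 0. If κ(w) = (max_i w_i)/(min_i w_i) < 1/ρ, then the composed map 𝒜 ∘ W^{-1} satisfies the ℓ^q-robust nullspace property of order s with respect to ‖·‖ with parameters ρ̃ = κ(w)·ρ and τ̃ = (max_i w_i)·τ. -/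
open Finset

/-- The `ℓ^q`-robust nullspace property of order `s` of a linear map
`A : ℝ^N → ℂ^{n×n}` with respect to a norm `nrm` with parameters `ρ, τ`. -/
def NSP {N n : ℕ} (A : (Fin N → ℝ) →ₗ[ℝ] Matrix (Fin n) (Fin n) ℂ)
    (nrm : Matrix (Fin n) (Fin n) ℂ → ℝ) (q : ℝ) (s : ℕ) (ρ τ : ℝ) : Prop :=
  ∀ S : Finset (Fin N), S.card ≤ s → ∀ v : Fin N → ℝ,
    (∑ i ∈ S, |v i| ^ q) ^ (1 / q) ≤
      ρ / (s : ℝ) ^ (1 - 1 / q) * (∑ i ∈ Sᶜ, |v i|) + τ * nrm (A v)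

theorem stmt0 {N n : ℕ} [NeZero N]
    (A : (Fin N → ℝ) →ₗ[ℝ] Matrix (Fin n) (Fin n) ℂ)
    (nrm : Matrix (Fin n) (Fin n) ℂ → ℝ) (q : ℝ) (hq : 1 ≤ q)
    (s : ℕ) (ρ τ : ℝ) (hρ : ρ ∈ Set.Ioo (0 : ℝ) 1) (hτ : 0 < τ)
    (hA : NSP A nrm q s ρ τ)
    (w : Fin N → ℝ) (hw : ∀ i, 0 < w i)
    (κ : ℝ) (hκ : κ = (⨆ i, w i) / (⨅ i, w i))
    (hκρ : κ < 1 / ρ) :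
    NSP (A ∘ₗ (Matrix.diagonal fun i => (w i)⁻¹).mulVecLin) nrm q s
      (κ * ρ) ((⨆ i, w i) * τ) := by
  have hq0 : (0:ℝ) < q := lt_of_lt_of_le one_pos hq
  set M := ⨆ i, w i with hMdef
  set m := ⨅ i, w i with hmdef
  have hMle : ∀ i, w i ≤ M := fun i =>
    le_ciSup (Set.Finite.bddAbove (Set.finite_range w)) i
  have hmle : ∀ i, m ≤ w i := fun i =>
    ciInf_le (Set.Finite.bddBelow (Set.finite_range w)) i
  have hm : 0 < m := by
    obtain ⟨i₀, hi₀⟩ := Finite.exists_min w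
    exact lt_of_lt_of_le (hw i₀) (le_ciInf hi₀)
  have hM : 0 < M := lt_of_lt_of_le hm (le_trans (hmle (Classical.arbitrary _)) (hMle _))
  intro S hS v
  set v' : Fin N → ℝ := fun i => v i / w i with hv'
  have hAv : (A ∘ₗ (Matrix.diagonal fun i => (w i)⁻¹).mulVecLin) v = A v' := by
    rw [LinearMap.comp_apply]
    congr 1
    funext i
    simp [Matrix.mulVecLin_apply, Matrix.mulVec_diagonal, hv', div_eq_inv_mul]
  have key := hA S hS v'
  -- LHS bound
  have hL : (∑ i ∈ S, |v i| ^ q) ^ (1/q) ≤ M * (∑ i ∈ S, |v' i| ^ q) ^ (1/q) := by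
    have h1 : (∑ i ∈ S, |v i| ^ q) ≤ M ^ q * ∑ i ∈ S, |v' i| ^ q := by
      rw [Finset.mul_sum]
      apply Finset.sum_le_sum
      intro i _
      have : |v i| = w i * |v' i| := by
        rw [hv', abs_div, abs_of_pos (hw i), mul_div_cancel₀ _ (ne_of_gt (hw i))]
      rw [this, Real.mul_rpow (le_of_lt (hw i)) (abs_nonneg _)]
      exact mul_le_mul_of_nonneg_right
        (Real.rpow_le_rpow (le_of_lt (hw i)) (hMle i) (le_of_lt hq0))
        (Real.rpow_nonneg (abs_nonneg _) _)
    calc (∑ i ∈ S, |v i| ^ q) ^ (1/q)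
        ≤ (M ^ q * ∑ i ∈ S, |v' i| ^ q) ^ (1/q) := by
          apply Real.rpow_le_rpow (Finset.sum_nonneg fun i _ => Real.rpow_nonneg (abs_nonneg _) _) h1 (by positivity)
      _ = M * (∑ i ∈ S, |v' i| ^ q) ^ (1/q) := by
          rw [Real.mul_rpow (by positivity) (Finset.sum_nonneg fun i _ => Real.rpow_nonneg (abs_nonneg _) _),
            ← Real.rpow_mul (le_of_lt hM), mul_one_div, div_self (ne_of_gt hq0),
            Real.rpow_one]
    -- note: rpow_natCast misuse; fix below
  have hsum : (∑ i ∈ Sᶜ, |v' i|) ≤ (∑ i ∈ Sᶜ, |v i|) / m := by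
    rw [Finset.sum_div]
    apply Finset.sum_le_sum
    intro i _
    rw [hv', abs_div, abs_of_pos (hw i)]
    exact div_le_div_of_nonneg_left (abs_nonneg _) hm (hmle i)
  have hden : (0:ℝ) ≤ ρ / (s:ℝ) ^ (1 - 1/q) := by
    apply div_nonneg (le_of_lt hρ.1) (Real.rpow_nonneg (Nat.cast_nonneg _) _)
  calc (∑ i ∈ S, |v i| ^ q) ^ (1/q)
      ≤ M * (∑ i ∈ S, |v' i| ^ q) ^ (1/q) := hL
    _ ≤ M * (ρ / (s:ℝ) ^ (1 - 1/q) * (∑ i ∈ Sᶜ, |v' i|) + τ * nrm (A v')) :=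
        mul_le_mul_of_nonneg_left key (le_of_lt hM)
    _ ≤ M * (ρ / (s:ℝ) ^ (1 - 1/q) * ((∑ i ∈ Sᶜ, |v i|) / m) + τ * nrm (A v')) := by
        gcongr
    _ = κ * ρ / (s:ℝ) ^ (1 - 1/q) * (∑ i ∈ Sᶜ, |v i|) + M * τ * nrm (A v') := by
        rw [hκ]; field_simp
    _ = κ * ρ / (s:ℝ) ^ (1 - 1/q) * (∑ i ∈ Sᶜ, |v i|) + M * τ *
          nrm ((A ∘ₗ (Matrix.diagonal fun i => (w i)⁻¹).mulVecLin) v) := by rw [hAv]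
end

section
/- Let a ∈ ℂ^n be a random vector whose real and imaginary parts of the entries are independent centered sub-Gaussian random variables with ψ₂-norms bounded by K, and let Z ∈ ℂ^{n×n}. Then for all t ≥ 0, P(|⟨a, Za⟩ − E⟨a, Za⟩| > t) ≤ 4 exp(−c min{t²/(4K⁴‖Z‖_F²), t/(√2 K²‖Z‖_o)}), where c is the universal constant in the real Hanson–Wright inequality. -/
open Finset MeasureTheory Matrix
open Pointwise

/-- Frobenius norm of a matrix. -/
noncomputable def frob {m : Type*} [Fintype m] {𝕜 : Type*} [RCLike 𝕜]
    (M : Matrix m m 𝕜) : ℝ :=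
  Real.sqrt (∑ i, ∑ j, ‖M i j‖ ^ 2)

/-- Operator (spectral) norm of a matrix, ℓ²→ℓ². -/
noncomputable def opN {m : Type*} [Fintype m] {𝕜 : Type*} [RCLike 𝕜]
    (M : Matrix m m 𝕜) : ℝ :=
  sSup {r : ℝ | ∃ x : m → 𝕜, Real.sqrt (∑ i, ‖x i‖ ^ 2) ≤ 1 ∧
    r = Real.sqrt (∑ i, ‖M.mulVec x i‖ ^ 2)}

noncomputable def real1 {n : ℕ} (W : Matrix (Fin n) (Fin n) ℂ) :
    Matrix (Fin (n + n)) (Fin (n + n)) ℝ :=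
  fun i j =>
    Fin.addCases (fun i' => Fin.addCases (fun j' => (W i' j').re) (fun j' => -(W i' j').im) j)
      (fun i' => Fin.addCases (fun j' => (W i' j').im) (fun j' => (W i' j').re) j) i

@[simp] lemma real1_cc {n : ℕ} (W : Matrix (Fin n) (Fin n) ℂ) (i j : Fin n) :
    real1 W (Fin.castAdd n i) (Fin.castAdd n j) = (W i j).re := by
  simp [real1]

@[simp] lemma real1_cn {n : ℕ} (W : Matrix (Fin n) (Fin n) ℂ) (i j : Fin n) :
    real1 W (Fin.castAdd n i) (Fin.natAdd n j) = -(W i j).im := by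
  simp only [real1, Fin.addCases_left, Fin.addCases_right]

@[simp] lemma real1_nc {n : ℕ} (W : Matrix (Fin n) (Fin n) ℂ) (i j : Fin n) :
    real1 W (Fin.natAdd n i) (Fin.castAdd n j) = (W i j).im := by
  simp only [real1, Fin.addCases_left, Fin.addCases_right]

@[simp] lemma real1_nn {n : ℕ} (W : Matrix (Fin n) (Fin n) ℂ) (i j : Fin n) :
    real1 W (Fin.natAdd n i) (Fin.natAdd n j) = (W i j).re := by
  simp only [real1, Fin.addCases_left, Fin.addCases_right]

lemma frob_sq {m : Type*} [Fintype m] {𝕜 : Type*} [RCLike 𝕜] (M : Matrix m m 𝕜) :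
    frob M ^ 2 = ∑ i, ∑ j, ‖M i j‖ ^ 2 := by
  rw [frob, Real.sq_sqrt]
  positivity

lemma frob_real1 {n : ℕ} (W : Matrix (Fin n) (Fin n) ℂ) :
    frob (real1 W) ^ 2 = 2 * frob W ^ 2 := by
  rw [frob_sq, frob_sq]
  rw [Fin.sum_univ_add]
  simp only [Fin.sum_univ_add, real1_cc, real1_cn, real1_nc, real1_nn]
  have : ∀ i j : Fin n, ‖W i j‖ ^ 2 = (W i j).re ^ 2 + (W i j).im ^ 2 := by
    intro i j
    rw [Complex.sq_norm, Complex.normSq_apply]; ring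
  simp only [this]
  simp [Finset.sum_add_distrib, Finset.mul_sum]
  ring

/-- complexification of a real vector of length n+n -/
noncomputable def cvec {n : ℕ} (x : Fin (n + n) → ℝ) : Fin n → ℂ :=
  fun k => (x (Fin.castAdd n k) : ℂ) + (x (Fin.natAdd n k) : ℂ) * Complex.I

@[simp] lemma cvec_re {n : ℕ} (x : Fin (n + n) → ℝ) (k : Fin n) :
    (cvec x k).re = x (Fin.castAdd n k) := by simp [cvec]

@[simp] lemma cvec_im {n : ℕ} (x : Fin (n + n) → ℝ) (k : Fin n) :
    (cvec x k).im = x (Fin.natAdd n k) := by simp [cvec]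

lemma mulVec_real1_c {n : ℕ} (W : Matrix (Fin n) (Fin n) ℂ) (x : Fin (n + n) → ℝ) (i : Fin n) :
    (real1 W).mulVec x (Fin.castAdd n i) = (W.mulVec (cvec x) i).re := by
  simp only [Matrix.mulVec, dotProduct, Complex.re_sum, Fin.sum_univ_add,
    real1_cc, real1_cn, Complex.mul_re, cvec_re, cvec_im, ← Finset.sum_add_distrib]
  exact Finset.sum_congr rfl fun _ _ => by ring

lemma mulVec_real1_n {n : ℕ} (W : Matrix (Fin n) (Fin n) ℂ) (x : Fin (n + n) → ℝ) (i : Fin n) :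
    (real1 W).mulVec x (Fin.natAdd n i) = (W.mulVec (cvec x) i).im := by
  simp only [Matrix.mulVec, dotProduct, Complex.im_sum, Fin.sum_univ_add,
    real1_nc, real1_nn, Complex.mul_im, cvec_re, cvec_im, ← Finset.sum_add_distrib]
  exact Finset.sum_congr rfl fun _ _ => by ring

lemma norm_sq_complex (z : ℂ) : ‖z‖ ^ 2 = z.re ^ 2 + z.im ^ 2 := by
  rw [Complex.sq_norm, Complex.normSq_apply]; ring

lemma sum_sq_cvec {n : ℕ} (x : Fin (n + n) → ℝ) :
    ∑ k, ‖cvec x k‖ ^ 2 = ∑ i, ‖x i‖ ^ 2 := by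
  simp only [norm_sq_complex, cvec_re, cvec_im, Fin.sum_univ_add, Real.norm_eq_abs, sq_abs]
  rw [Finset.sum_add_distrib]

lemma sum_sq_mulVec_real1 {n : ℕ} (W : Matrix (Fin n) (Fin n) ℂ) (x : Fin (n + n) → ℝ) :
    ∑ i, ‖(real1 W).mulVec x i‖ ^ 2 = ∑ k, ‖W.mulVec (cvec x) k‖ ^ 2 := by
  simp only [norm_sq_complex, Fin.sum_univ_add, mulVec_real1_c, mulVec_real1_n,
    Real.norm_eq_abs, sq_abs]
  rw [Finset.sum_add_distrib]

lemma opN_real1 {n : ℕ} (W : Matrix (Fin n) (Fin n) ℂ) : opN (real1 W) = opN W := by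
  unfold opN
  congr 1
  ext r
  constructor
  · rintro ⟨x, hx, rfl⟩
    exact ⟨cvec x, by rwa [sum_sq_cvec], by rw [sum_sq_mulVec_real1]⟩
  · rintro ⟨z, hz, rfl⟩
    refine ⟨Fin.append (fun k => (z k).re) (fun k => (z k).im), ?_, ?_⟩
    · have hc : cvec (Fin.append (fun k => (z k).re) (fun k => (z k).im)) = z := by
        funext k
        simp only [cvec, Fin.append_left, Fin.append_right, Complex.re_add_im]
      rw [← sum_sq_cvec, hc]; exact hz
    · have hc : cvec (Fin.append (fun k => (z k).re) (fun k => (z k).im)) = z := by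
        funext k
        simp only [cvec, Fin.append_left, Fin.append_right, Complex.re_add_im]
      rw [sum_sq_mulVec_real1, hc]

lemma frob_smul {n : ℕ} (σ : ℂ) (Z : Matrix (Fin n) (Fin n) ℂ) :
    frob (σ • Z) ^ 2 = ‖σ‖ ^ 2 * frob Z ^ 2 := by
  rw [frob_sq, frob_sq, Finset.mul_sum]
  refine Finset.sum_congr rfl fun i _ => ?_
  rw [Finset.mul_sum]
  refine Finset.sum_congr rfl fun j _ => ?_
  simp [Matrix.smul_apply, norm_smul, mul_pow]

lemma opN_nonneg {m : Type*} [Fintype m] {𝕜 : Type*} [RCLike 𝕜] (M : Matrix m m 𝕜) :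
    0 ≤ opN M := by
  have h0 : (0 : ℝ) ∈ {r : ℝ | ∃ x : m → 𝕜, Real.sqrt (∑ i, ‖x i‖ ^ 2) ≤ 1 ∧
      r = Real.sqrt (∑ i, ‖M.mulVec x i‖ ^ 2)} := by
    refine ⟨0, by simp, by simp [Matrix.mulVec_zero]⟩
  by_cases hb : BddAbove {r : ℝ | ∃ x : m → 𝕜, Real.sqrt (∑ i, ‖x i‖ ^ 2) ≤ 1 ∧
      r = Real.sqrt (∑ i, ‖M.mulVec x i‖ ^ 2)}
  · exact le_csSup hb h0
  · rw [opN, Real.sSup_of_not_bddAbove hb]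

lemma opN_smul {n : ℕ} (σ : ℂ) (Z : Matrix (Fin n) (Fin n) ℂ) :
    opN (σ • Z) = ‖σ‖ * opN Z := by
  have hset : {r : ℝ | ∃ x : Fin n → ℂ, Real.sqrt (∑ i, ‖x i‖ ^ 2) ≤ 1 ∧
      r = Real.sqrt (∑ i, ‖(σ • Z).mulVec x i‖ ^ 2)} =
      ‖σ‖ • {r : ℝ | ∃ x : Fin n → ℂ, Real.sqrt (∑ i, ‖x i‖ ^ 2) ≤ 1 ∧
      r = Real.sqrt (∑ i, ‖Z.mulVec x i‖ ^ 2)} := by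
    have key : ∀ (x : Fin n → ℂ), Real.sqrt (∑ i, ‖(σ • Z).mulVec x i‖ ^ 2) =
        ‖σ‖ * Real.sqrt (∑ i, ‖Z.mulVec x i‖ ^ 2) := by
      intro x
      have : ∀ i, ‖(σ • Z).mulVec x i‖ ^ 2 = ‖σ‖ ^ 2 * ‖Z.mulVec x i‖ ^ 2 := by
        intro i
        rw [Matrix.smul_mulVec, Pi.smul_apply, norm_smul, mul_pow]
      simp only [this, ← Finset.mul_sum]
      rw [Real.sqrt_mul (by positivity), Real.sqrt_sq (norm_nonneg σ)]
    ext r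
    simp only [Set.mem_setOf_eq, Set.mem_smul_set, smul_eq_mul]
    constructor
    · rintro ⟨x, hx, rfl⟩
      exact ⟨Real.sqrt (∑ i, ‖Z.mulVec x i‖ ^ 2), ⟨x, hx, rfl⟩, (key x).symm⟩
    · rintro ⟨r', ⟨x, hx, rfl⟩, rfl⟩
      exact ⟨x, hx, (key x).symm⟩
  rw [opN, hset, Real.sSup_smul_of_nonneg (norm_nonneg σ), smul_eq_mul, opN]

lemma form_real1 {n : ℕ} (W : Matrix (Fin n) (Fin n) ℂ) (a : Fin n → ℂ) :
    (Fin.append (fun k => (a k).re) (fun k => (a k).im)) ⬝ᵥ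
      (real1 W).mulVec (Fin.append (fun k => (a k).re) (fun k => (a k).im)) =
    (star a ⬝ᵥ W.mulVec a).re := by
  have hc : cvec (Fin.append (fun k => (a k).re) (fun k => (a k).im)) = a := by
    funext k
    simp only [cvec, Fin.append_left, Fin.append_right, Complex.re_add_im]
  simp only [dotProduct, Fin.sum_univ_add, Fin.append_left, Fin.append_right,
    mulVec_real1_c, mulVec_real1_n, hc, Complex.re_sum, Pi.star_apply, Complex.star_def,
    Complex.mul_re, Complex.conj_re, Complex.conj_im, ← Finset.sum_add_distrib]
  exact Finset.sum_congr rfl fun _ _ => by ring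

lemma abs_le_of_re_im (z : ℂ) (t : ℝ) (ht : 0 ≤ t)
    (h1 : |z.re| ≤ t / Real.sqrt 2) (h2 : |z.im| ≤ t / Real.sqrt 2) :
    ‖z‖ ≤ t := by
  rw [Complex.norm_def, Complex.normSq_apply]
  have e : (t / Real.sqrt 2) * (t / Real.sqrt 2) = t ^ 2 / 2 := by
    rw [div_mul_div_comm, Real.mul_self_sqrt (by norm_num : (0:ℝ) ≤ 2)]; ring
  have hp := mul_self_le_mul_self (abs_nonneg z.re) h1
  rw [abs_mul_abs_self, e] at hp
  have hq := mul_self_le_mul_self (abs_nonneg z.im) h2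
  rw [abs_mul_abs_self, e] at hq
  calc Real.sqrt (z.re * z.re + z.im * z.im) ≤ Real.sqrt (t ^ 2) :=
        Real.sqrt_le_sqrt (by linarith)
    _ = t := Real.sqrt_sq ht

lemma abs_le_of_sum_diff (z : ℂ) (t : ℝ) (ht : 0 ≤ t)
    (h1 : |z.re + z.im| ≤ t) (h2 : |z.re - z.im| ≤ t) :
    ‖z‖ ≤ t := by
  rw [Complex.norm_def, Complex.normSq_apply]
  have hp := mul_self_le_mul_self (abs_nonneg _) h1
  rw [abs_mul_abs_self] at hp
  have hq := mul_self_le_mul_self (abs_nonneg _) h2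
  rw [abs_mul_abs_self] at hq
  calc Real.sqrt (z.re * z.re + z.im * z.im) ≤ Real.sqrt (t ^ 2) :=
        Real.sqrt_le_sqrt (by nlinarith)
    _ = t := Real.sqrt_sq ht

lemma union_toReal {Ω : Type*} [MeasurableSpace Ω] (μ : Measure Ω) [IsProbabilityMeasure μ]
    {S A B : Set Ω} (h : S ⊆ A ∪ B) {x y : ℝ} (ha : (μ A).toReal ≤ x) (hb : (μ B).toReal ≤ y) :
    (μ S).toReal ≤ x + y := by
  have h1 : μ S ≤ μ A + μ B := (measure_mono h).trans (measure_union_le A B)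
  have h2 := ENNReal.toReal_mono (ENNReal.add_ne_top.mpr ⟨measure_ne_top μ A, measure_ne_top μ B⟩) h1
  rw [ENNReal.toReal_add (measure_ne_top μ A) (measure_ne_top μ B)] at h2
  linarith

lemma int_of_re_im {Ω : Type*} [MeasurableSpace Ω] {μ : Measure Ω} {X : Ω → ℂ}
    (h1 : Integrable (fun ω => (X ω).re) μ) (h2 : Integrable (fun ω => (X ω).im) μ) :
    Integrable X μ := by
  have hX : X = fun ω => ((X ω).re : ℂ) + ((X ω).im : ℂ) * Complex.I := by
    funext ω; rw [Complex.re_add_im]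
  rw [hX]
  exact (h1.ofReal).add ((h2.ofReal).mul_const Complex.I)

theorem helper {Ω : Type*} [MeasurableSpace Ω] (μ : Measure Ω) [IsProbabilityMeasure μ]
    (X : Ω → ℂ) (E t : ℝ) (ht : 0 ≤ t)
    (h1 : (μ {ω | t / Real.sqrt 2 < |(X ω).re - ∫ ω', (X ω').re ∂μ|}).toReal ≤ 2 * E)
    (h2 : (μ {ω | t / Real.sqrt 2 < |(X ω).im - ∫ ω', (X ω').im ∂μ|}).toReal ≤ 2 * E)
    (h3 : (μ {ω | t < |((X ω).re + (X ω).im) - ∫ ω', ((X ω').re + (X ω').im) ∂μ|}).toReal ≤ 2 * E)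
    (h4 : (μ {ω | t < |((X ω).re - (X ω).im) - ∫ ω', ((X ω').re - (X ω').im) ∂μ|}).toReal ≤ 2 * E) :
    (μ {ω | t < ‖X ω - ∫ ω', X ω' ∂μ‖}).toReal ≤ 4 * E := by
  set w := ∫ ω', X ω' ∂μ with hw
  by_cases hP : (∫ ω', (X ω').re ∂μ) = w.re ∧ (∫ ω', (X ω').im ∂μ) = w.im
  · rw [hP.1] at h1
    rw [hP.2] at h2
    have hsub : {ω | t < ‖X ω - w‖} ⊆
        {ω | t / Real.sqrt 2 < |(X ω).re - w.re|} ∪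
        {ω | t / Real.sqrt 2 < |(X ω).im - w.im|} := by
      intro ω hω
      simp only [Set.mem_union, Set.mem_setOf_eq] at *
      by_contra hcon
      push_neg at hcon
      have hle := abs_le_of_re_im (X ω - w) t ht
        (by simpa [Complex.sub_re] using hcon.1) (by simpa [Complex.sub_im] using hcon.2)
      exact absurd hω (not_lt.mpr hle)
    have := union_toReal μ hsub h1 h2
    linarith
  · have hXni : ¬ Integrable X μ := by
      intro hX
      refine hP ⟨?_, ?_⟩
      · have := Complex.reCLM.integral_comp_comm hX
        simpa [← hw] using this
      · have := Complex.imCLM.integral_comp_comm hX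
        simpa [← hw] using this
    have hw0 : w = 0 := by rw [hw]; exact integral_undef hXni
    by_cases hS : Integrable (fun ω => (X ω).re + (X ω).im) μ
    · exfalso
      have hre : ¬ Integrable (fun ω => (X ω).re) μ := by
        intro h
        have him : Integrable (fun ω => (X ω).im) μ := by
          have heq : (fun ω => (X ω).im) = fun ω => ((X ω).re + (X ω).im) - (X ω).re := by
            funext ω; ring
          rw [heq]; exact hS.sub h
        exact hXni (int_of_re_im h him)
      have him : ¬ Integrable (fun ω => (X ω).im) μ := by
        intro h
        have hre' : Integrable (fun ω => (X ω).re) μ := by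
          have heq : (fun ω => (X ω).re) = fun ω => ((X ω).re + (X ω).im) - (X ω).im := by
            funext ω; ring
          rw [heq]; exact hS.sub h
        exact hre hre'
      exact hP ⟨by rw [integral_undef hre, hw0]; simp, by rw [integral_undef him, hw0]; simp⟩
    · by_cases hD : Integrable (fun ω => (X ω).re - (X ω).im) μ
      · exfalso
        have hre : ¬ Integrable (fun ω => (X ω).re) μ := by
          intro h
          have him : Integrable (fun ω => (X ω).im) μ := by
            have heq : (fun ω => (X ω).im) = fun ω => (X ω).re - ((X ω).re - (X ω).im) := by
              funext ω; ring
            rw [heq]; exact h.sub hD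
          exact hXni (int_of_re_im h him)
        have him : ¬ Integrable (fun ω => (X ω).im) μ := by
          intro h
          have hre' : Integrable (fun ω => (X ω).re) μ := by
            have heq : (fun ω => (X ω).re) = fun ω => ((X ω).re - (X ω).im) + (X ω).im := by
              funext ω; ring
            rw [heq]; exact hD.add h
          exact hre hre'
        exact hP ⟨by rw [integral_undef hre, hw0]; simp, by rw [integral_undef him, hw0]; simp⟩
      · rw [integral_undef hS] at h3
        rw [integral_undef hD] at h4
        have hsub : {ω | t < ‖X ω - w‖} ⊆
            {ω | t < |((X ω).re + (X ω).im) - 0|} ∪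
            {ω | t < |((X ω).re - (X ω).im) - 0|} := by
          intro ω hω
          simp only [Set.mem_union, Set.mem_setOf_eq, sub_zero] at *
          by_contra hcon
          push_neg at hcon
          have hle := abs_le_of_sum_diff (X ω - w) t ht
            (by simpa [hw0, Complex.sub_re, Complex.sub_im] using hcon.1)
            (by simpa [hw0, Complex.sub_re, Complex.sub_im] using hcon.2)
          exact absurd hω (not_lt.mpr hle)
        have := union_toReal μ hsub h3 h4
        linarith

theorem stmt9 {n : ℕ} {Ω : Type*} [MeasurableSpace Ω] (μ : Measure Ω)
    [IsProbabilityMeasure μ]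
    (a : Ω → Fin n → ℂ) (K c : ℝ) (hK : 0 < K) (hc : 0 < c)
    (Z : Matrix (Fin n) (Fin n) ℂ)
    -- the real Hanson–Wright inequality for the realified vector (Re a, Im a)
    (hHW : ∀ (M : Matrix (Fin (n + n)) (Fin (n + n)) ℝ) (t : ℝ), 0 ≤ t →
      (μ {ω | t < |(Fin.append (fun k => (a ω k).re) (fun k => (a ω k).im)) ⬝ᵥ
            M.mulVec (Fin.append (fun k => (a ω k).re) (fun k => (a ω k).im)) -
          ∫ ω', (Fin.append (fun k => (a ω' k).re) (fun k => (a ω' k).im)) ⬝ᵥ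
            M.mulVec (Fin.append (fun k => (a ω' k).re) (fun k => (a ω' k).im)) ∂μ|}).toReal ≤
        2 * Real.exp (-(c * min (t ^ 2 / (K ^ 4 * frob M ^ 2)) (t / (K ^ 2 * opN M))))) :
    ∀ t : ℝ, 0 ≤ t →
      (μ {ω | t < ‖(star (a ω) ⬝ᵥ Z.mulVec (a ω)) -
          ∫ ω', star (a ω') ⬝ᵥ Z.mulVec (a ω') ∂μ‖}).toReal ≤
        4 * Real.exp (-(c * min (t ^ 2 / (4 * K ^ 4 * frob Z ^ 2))
          (t / (Real.sqrt 2 * K ^ 2 * opN Z)))) := by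

  intro t ht
  have hs : (0:ℝ) ≤ t / Real.sqrt 2 := by positivity
  have key : ∀ σ : ℂ, ∀ u : ℝ, 0 ≤ u →
      (μ {ω | u < |(σ * (star (a ω) ⬝ᵥ Z.mulVec (a ω))).re -
        ∫ ω', (σ * (star (a ω') ⬝ᵥ Z.mulVec (a ω'))).re ∂μ|}).toReal ≤
      2 * Real.exp (-(c * min (u ^ 2 / (K ^ 4 * (2 * (‖σ‖ ^ 2 * frob Z ^ 2))))
        (u / (K ^ 2 * (‖σ‖ * opN Z))))) := by
    intro σ u hu
    have h := hHW (real1 (σ • Z)) u hu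
    have hform : ∀ ω : Ω, (Fin.append (fun k => (a ω k).re) (fun k => (a ω k).im)) ⬝ᵥ
        (real1 (σ • Z)).mulVec (Fin.append (fun k => (a ω k).re) (fun k => (a ω k).im)) =
        (σ * (star (a ω) ⬝ᵥ Z.mulVec (a ω))).re := by
      intro ω
      rw [form_real1]
      congr 1
      rw [Matrix.smul_mulVec, dotProduct_smul, smul_eq_mul]
    simp only [hform] at h
    rwa [frob_real1, frob_smul, opN_real1, opN_smul] at h
  have e1a : (t / Real.sqrt 2) ^ 2 / (K ^ 4 * (2 * frob Z ^ 2)) =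
      t ^ 2 / (4 * K ^ 4 * frob Z ^ 2) := by
    rw [div_pow, Real.sq_sqrt (by norm_num : (0:ℝ) ≤ 2), div_div]
    congr 1
    ring
  have e1b : (t / Real.sqrt 2) / (K ^ 2 * opN Z) = t / (Real.sqrt 2 * K ^ 2 * opN Z) := by
    rw [div_div]
    congr 1
    ring
  -- bound 1 : real part
  have hb1 := key 1 (t / Real.sqrt 2) hs
  simp only [one_mul, norm_one, one_pow] at hb1
  rw [e1a, e1b] at hb1
  -- bound 2 : imaginary part
  have him : ∀ z : ℂ, (-Complex.I * z).re = z.im := by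
    intro z; simp [Complex.mul_re]
  have hb2 := key (-Complex.I) (t / Real.sqrt 2) hs
  simp only [him, norm_neg, Complex.norm_I, one_pow, one_mul] at hb2
  rw [e1a, e1b] at hb2
  -- bound 3 : sum
  have hnrm1 : ‖(1 - Complex.I : ℂ)‖ = Real.sqrt 2 := by
    rw [← Real.sqrt_sq (norm_nonneg _), norm_sq_complex]
    simp
    norm_num
  have hnrm2 : ‖(1 + Complex.I : ℂ)‖ = Real.sqrt 2 := by
    rw [← Real.sqrt_sq (norm_nonneg _), norm_sq_complex]
    simp
    norm_num
  have e3a : t ^ 2 / (K ^ 4 * (2 * (Real.sqrt 2 ^ 2 * frob Z ^ 2))) =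
      t ^ 2 / (4 * K ^ 4 * frob Z ^ 2) := by
    rw [Real.sq_sqrt (by norm_num : (0:ℝ) ≤ 2)]
    congr 1
    ring
  have e3b : t / (K ^ 2 * (Real.sqrt 2 * opN Z)) = t / (Real.sqrt 2 * K ^ 2 * opN Z) := by
    congr 1
    ring
  have hsum : ∀ z : ℂ, ((1 - Complex.I) * z).re = z.re + z.im := by
    intro z
    simp [Complex.mul_re, Complex.sub_re, Complex.sub_im]
  have hb3 := key (1 - Complex.I) t ht
  simp only [hsum] at hb3
  rw [hnrm1, e3a, e3b] at hb3
  -- bound 4 : difference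
  have hdiff : ∀ z : ℂ, ((1 + Complex.I) * z).re = z.re - z.im := by
    intro z
    simp [Complex.mul_re, Complex.add_re, Complex.add_im]
  have hb4 := key (1 + Complex.I) t ht
  simp only [hdiff] at hb4
  rw [hnrm2, e3a, e3b] at hb4
  exact helper μ (fun ω => star (a ω) ⬝ᵥ Z.mulVec (a ω))
    (Real.exp (-(c * min (t ^ 2 / (4 * K ^ 4 * frob Z ^ 2))
      (t / (Real.sqrt 2 * K ^ 2 * opN Z))))) t ht hb1 hb2 hb3 hb4
end
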